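/- arXiv:2404.12647 — 2 statements merged into one kernel-verified Lean document; each statement's English description precedes it below -/
import Mathlib

section
/- (Moment bound for the PF twirl on distinct basis states) Let P be a uniformly random permutation operator on C^d and F a uniformly random binary phase operator, independent. For distinct tuples x, y ∈ [d]^t, E_{P,F} [(PF)^{⊗t} |x⟩⟨y| (PF)^{⊗t,†}] equals Λ R_σ / Tr[Λ] if y = x_σ for some σ ∈ S_t, and 0 otherwise. -/
/-- The projector `Λ` onto the distinct-tuple subspace of `(ℂ^d)^{⊗t}`. -/
def distinctProj (d t : ℕ) : Matrix (Fin t → Fin d) (Fin t → Fin d) ℂ :=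
  Matrix.of fun a b => if a = b ∧ Function.Injective a then 1 else 0

/-- The representation `R_σ` of `S_t` on `(ℂ^d)^{⊗t}` permuting tensor factors:
`R_σ |b⟩ = |b ∘ σ⁻¹⟩`. -/
def permOp (d t : ℕ) (σ : Equiv.Perm (Fin t)) :
    Matrix (Fin t → Fin d) (Fin t → Fin d) ℂ :=
  Matrix.of fun a b => if a = fun i => b (σ.symm i) then 1 else 0

open Finset

lemma distinctProj_apply (d t : ℕ) (a b : Fin t → Fin d) [Decidable (Function.Injective a)] :
    distinctProj d t a b = if a = b ∧ Function.Injective a then 1 else 0 := by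
  rw [distinctProj]; simp only [Matrix.of_apply]; congr

lemma permOp_apply (d t : ℕ) (σ : Equiv.Perm (Fin t)) (a b : Fin t → Fin d) :
    permOp d t σ a b = if a = fun i => b (σ.symm i) then 1 else 0 := rfl

lemma std_apply {n : Type*} [DecidableEq n] (i j a b : n) :
    Matrix.single i j (1:ℂ) a b = if i = a ∧ j = b then 1 else 0 := rfl



lemma count_ext {d t : ℕ} (x a : Fin t → Fin d) (hx : Function.Injective x)
    (ha : Function.Injective a) :
    ∑ π : Equiv.Perm (Fin d), (if a = fun i => π (x i) then (1:ℂ) else 0)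
      = ((d - t).factorial : ℂ) := by
  classical
  have hcardsub : Fintype.card {π : Equiv.Perm (Fin d) // ∀ i, π (x i) = a i}
      = (d - t).factorial := by
    set s : Set (Fin d) := Set.range x with hs
    set u : Set (Fin d) := Set.range a with hu
    let g : ↥s ≃ ↥u := (Equiv.ofInjective x hx).symm.trans (Equiv.ofInjective a ha)
    have hg : ∀ (i : Fin t) (h : x i ∈ s), ((g ⟨x i, h⟩ : ↥u) : Fin d) = a i := by
      intro i h
      simp only [g, Equiv.trans_apply]
      set j := (Equiv.ofInjective x hx).symm ⟨x i, h⟩ with hj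
      have hxj : x j = x i :=
        congrArg Subtype.val ((Equiv.ofInjective x hx).apply_symm_apply ⟨x i, h⟩)
      rw [hx hxj]
      rfl
    have e1 : {π : Equiv.Perm (Fin d) // ∀ i, π (x i) = a i}
        ≃ {e : Fin d ≃ Fin d // ∀ z : s, e z = g z} := by
      apply Equiv.subtypeEquivRight
      intro π
      constructor
      · rintro h ⟨z, i, rfl⟩
        exact (h i).trans (hg i _).symm
      · intro h i
        have := h ⟨x i, Set.mem_range_self i⟩
        rwa [hg i] at this
    have hcx : Fintype.card ↥(sᶜ) = d - t := by
      rw [Fintype.card_compl_set]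
      simp [hs, Set.card_range_of_injective hx]
    have hcu : Fintype.card ↥(uᶜ) = d - t := by
      rw [Fintype.card_compl_set]
      simp [hu, Set.card_range_of_injective ha]
    rw [Fintype.card_congr (e1.trans (Equiv.Set.compl g)),
      Fintype.card_equiv (Fintype.equivOfCardEq (hcx.trans hcu.symm)), hcx]
  rw [Finset.sum_boole]
  norm_cast
  rw [← Fintype.card_subtype]
  rw [← hcardsub]
  apply Fintype.card_congr
  apply Equiv.subtypeEquivRight
  intro π
  constructor
  · intro h i; rw [h]
  · intro h; funext i; rw [h i]


open scoped Classical in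
lemma fsum {d t : ℕ} (x y : Fin t → Fin d) (hx : Function.Injective x)
    (hy : Function.Injective y) :
    (∑ f : Fin d → Bool,
      ((-1 : ℂ) ^ (∑ i, ((if f (x i) then 1 else 0) + (if f (y i) then 1 else 0)))))
    = if Set.range x = Set.range y then (2:ℂ)^d else 0 := by
  classical
  set A : Finset (Fin d) := Finset.univ.image x with hA
  set B : Finset (Fin d) := Finset.univ.image y with hB
  set gfun : Fin d → Bool → ℂ := fun z b =>
    (if z ∈ A then (if b then (-1:ℂ) else 1) else 1) *
    (if z ∈ B then (if b then (-1:ℂ) else 1) else 1) with hgfun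
  have h1 : ∀ f : Fin d → Bool,
      ((-1 : ℂ) ^ (∑ i, ((if f (x i) then 1 else 0) + (if f (y i) then 1 else 0))))
      = ∏ z : Fin d, gfun z (f z) := by
    intro f
    rw [← Finset.prod_pow_eq_pow_sum]
    have e1 : ∀ i : Fin t,
        ((-1:ℂ)) ^ (((if f (x i) then 1 else 0) + (if f (y i) then 1 else 0)) : ℕ)
        = (if f (x i) then (-1:ℂ) else 1) * (if f (y i) then (-1:ℂ) else 1) := by
      intro i
      rw [pow_add]
      congr 1 <;> split <;> simp
    rw [Finset.prod_congr rfl (fun i _ => e1 i), Finset.prod_mul_distrib]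
    have e2 : (∏ i : Fin t, (if f (x i) then (-1:ℂ) else 1))
        = ∏ z : Fin d, (if z ∈ A then (if f z then (-1:ℂ) else 1) else 1) := by
      rw [Finset.prod_ite_mem, Finset.univ_inter, hA,
        Finset.prod_image (fun a _ b _ h => hx h)]
    have e3 : (∏ i : Fin t, (if f (y i) then (-1:ℂ) else 1))
        = ∏ z : Fin d, (if z ∈ B then (if f z then (-1:ℂ) else 1) else 1) := by
      rw [Finset.prod_ite_mem, Finset.univ_inter, hB,
        Finset.prod_image (fun a _ b _ h => hy h)]
    rw [e2, e3, ← Finset.prod_mul_distrib]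
  rw [Finset.sum_congr rfl (fun f _ => h1 f)]
  have h2 : (∑ f : Fin d → Bool, ∏ z : Fin d, gfun z (f z))
      = ∏ z : Fin d, ∑ b : Bool, gfun z b := by
    rw [Finset.prod_univ_sum (fun _ => (Finset.univ : Finset Bool)) gfun,
      Fintype.piFinset_univ]
  rw [h2]
  have h3 : ∀ z : Fin d, (∑ b : Bool, gfun z b)
      = if ((z ∈ A) ↔ (z ∈ B)) then (2:ℂ) else 0 := by
    intro z
    rw [Fintype.sum_bool, hgfun]
    by_cases h : z ∈ A <;> by_cases h' : z ∈ B <;> simp [h, h'] <;> norm_num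
  rw [Finset.prod_congr rfl (fun z _ => h3 z)]
  have hAB : (A = B) ↔ (Set.range x = Set.range y) := by
    rw [← Finset.coe_inj, hA, hB, Finset.coe_image, Finset.coe_image,
      Finset.coe_univ, Set.image_univ, Set.image_univ]
  by_cases h : A = B
  · rw [if_pos (hAB.mp h)]
    have : ∀ z : Fin d, (if ((z ∈ A) ↔ (z ∈ B)) then (2:ℂ) else 0) = 2 := by
      intro z; rw [if_pos (by rw [h])]
    rw [Finset.prod_congr rfl (fun z _ => this z), Finset.prod_const,
      Finset.card_univ, Fintype.card_fin]
  · rw [if_neg (fun hc => h (hAB.mpr hc))]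
    have : ∃ z : Fin d, ¬ ((z ∈ A) ↔ (z ∈ B)) := by
      by_contra hc
      push_neg at hc
      exact h (Finset.ext fun z => (hc z))
    obtain ⟨z, hz⟩ := this
    exact Finset.prod_eq_zero (Finset.mem_univ z) (by rw [if_neg hz])

/-- PF twirl on distinct basis states: for independent uniformly random
`π ∈ S_d` (permutation operator `P`) and uniformly random Boolean `f` (phase operator `F`),
and distinct tuples `x, y ∈ [d]^t`, the average
`E_{P,F} (PF)^{⊗t} |x⟩⟨y| (PF)^{⊗t,†}` equals `Λ R_σ / Tr[Λ]` if `y = x_σ` for some `σ ∈ S_t`,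
and `0` otherwise.  (`(PF)^{⊗t}|z⟩ = (−1)^{Σ_i f(z_i)} |π∘z⟩`, `Tr Λ = d!/(d−t)!`.) -/
theorem stmt_15 (d t : ℕ) (x y : Fin t → Fin d)
    (hx : Function.Injective x) (hy : Function.Injective y)
    (M : Matrix (Fin t → Fin d) (Fin t → Fin d) ℂ)
    (hM : M = ((d.factorial : ℂ) * 2 ^ d)⁻¹ •
      ∑ π : Equiv.Perm (Fin d), ∑ f : Fin d → Bool,
        ((-1 : ℂ) ^ (∑ i, ((if f (x i) then 1 else 0) + (if f (y i) then 1 else 0)))) •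
          Matrix.single (fun i => π (x i)) (fun i => π (y i)) (1 : ℂ)) :
    (∀ σ : Equiv.Perm (Fin t), y = x ∘ ⇑σ →
        M = ((d.factorial / (d - t).factorial : ℕ) : ℂ)⁻¹ •
          (distinctProj d t * permOp d t σ))
    ∧ ((¬ ∃ σ : Equiv.Perm (Fin t), y = x ∘ ⇑σ) → M = 0) := by
  classical
  constructor
  · intro σ hσ
    have hty : ∀ i, y i = x (σ i) := fun i => congrFun hσ i
    have hr : Set.range x = Set.range y := by
      rw [hσ, Set.range_comp, Equiv.range_eq_univ, Set.image_univ]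
    have h2d : (2:ℂ)^d ≠ 0 := pow_ne_zero d two_ne_zero
    have hfac : (d.factorial : ℂ) ≠ 0 := Nat.cast_ne_zero.mpr (Nat.factorial_ne_zero d)
    have hM2 : M = ((d.factorial : ℂ))⁻¹ •
        ∑ π : Equiv.Perm (Fin d),
          Matrix.single (fun i => π (x i)) (fun i => π (y i)) (1 : ℂ) := by
      rw [hM]
      have hkey : ∀ π : Equiv.Perm (Fin d),
          (∑ f : Fin d → Bool,
            ((-1 : ℂ) ^ (∑ i, ((if f (x i) then 1 else 0) + (if f (y i) then 1 else 0)))) •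
              Matrix.single (fun i => π (x i)) (fun i => π (y i)) (1 : ℂ))
          = ((2:ℂ)^d) •
              Matrix.single (fun i => π (x i)) (fun i => π (y i)) (1 : ℂ) := by
        intro π
        rw [← Finset.sum_smul, fsum x y hx hy, if_pos hr]
      rw [Finset.sum_congr rfl (fun π _ => hkey π), ← Finset.smul_sum, smul_smul]
      congr 1
      field_simp
    rw [hM2]
    have htd : t ≤ d := by
      have := Fintype.card_le_of_injective x hx
      simpa using this
    ext a b
    rw [Matrix.smul_apply, Matrix.sum_apply, Matrix.smul_apply, smul_eq_mul, smul_eq_mul]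
    have hone : ∀ π : Equiv.Perm (Fin d),
        Matrix.single (fun i => π (x i)) (fun i => π (y i)) (1:ℂ) a b
        = (if b = a ∘ ⇑σ then (1:ℂ) else 0) * (if a = fun i => π (x i) then 1 else 0) := by
      intro π
      rw [std_apply]
      by_cases hpa : (fun i => π (x i)) = a
      · have hyb : (fun i => π (y i)) = a ∘ ⇑σ := by
          funext i; rw [hty i]; exact congrFun hpa (σ i)
        have hiff2 : (((fun i => π (x i)) = a) ∧ ((fun i => π (y i)) = b)) ↔ (b = a ∘ ⇑σ) := by
          rw [hyb]; simp [hpa, eq_comm]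
        rw [if_congr hiff2 rfl rfl, if_pos hpa.symm, mul_one]
      · have h1 : ¬(((fun i => π (x i)) = a) ∧ ((fun i => π (y i)) = b)) := fun hc => hpa hc.1
        have h2 : ¬(a = fun i => π (x i)) := fun hc => hpa hc.symm
        rw [if_neg h1, if_neg h2, mul_zero]
    rw [Finset.sum_congr rfl (fun π _ => hone π), ← Finset.mul_sum]
    have hsum : (∑ π : Equiv.Perm (Fin d), (if a = fun i => π (x i) then (1:ℂ) else 0))
        = if Function.Injective a then ((d - t).factorial : ℂ) else 0 := by
      by_cases hinj : Function.Injective a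
      · rw [if_pos hinj]; exact count_ext x a hx hinj
      · rw [if_neg hinj]
        apply Finset.sum_eq_zero
        intro π _
        rw [if_neg]
        intro hc
        exact hinj (by rw [hc]; exact (Equiv.injective π).comp hx)
    rw [hsum]
    have hmul : (distinctProj d t * permOp d t σ) a b
        = (if Function.Injective a then (1:ℂ) else 0) *
          (if a = fun i => b (σ.symm i) then 1 else 0) := by
      rw [Matrix.mul_apply]
      rw [Finset.sum_eq_single a]
      · rw [distinctProj_apply, permOp_apply]
        by_cases hinj : Function.Injective a
        · rw [if_pos ⟨rfl, hinj⟩, if_pos hinj]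
        · rw [if_neg (fun hc => hinj hc.2), if_neg hinj]
      · intro c _ hca
        rw [distinctProj_apply, if_neg (fun hc => hca hc.1.symm), zero_mul]
      · intro h; exact absurd (Finset.mem_univ a) h
    rw [hmul]
    have hiff : (b = a ∘ ⇑σ) ↔ (a = fun i => b (σ.symm i)) := by
      constructor
      · intro h; funext i; rw [h]; simp
      · intro h; funext i; rw [h]; simp
    by_cases hinj : Function.Injective a
    · by_cases hba : b = a ∘ ⇑σ
      · rw [if_pos hba, if_pos hinj, if_pos hinj, if_pos (hiff.mp hba), one_mul, mul_one, mul_one]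
        have hdvd : (d - t).factorial ∣ d.factorial :=
          Nat.factorial_dvd_factorial (Nat.sub_le d t)
        have hne : ((d - t).factorial : ℂ) ≠ 0 :=
          Nat.cast_ne_zero.mpr (Nat.factorial_ne_zero _)
        rw [Nat.cast_div hdvd hne, inv_div, div_eq_mul_inv, mul_comm]
      · rw [if_neg hba, if_neg (fun hc => hba (hiff.mpr hc))]; ring
    · rw [if_neg hinj, if_neg hinj]; ring
  · intro hne
    have hr : Set.range x ≠ Set.range y := by
      intro h
      apply hne
      refine ⟨(Equiv.ofInjective y hy).trans
        ((Equiv.setCongr h.symm).trans (Equiv.ofInjective x hx).symm), ?_⟩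
      funext i
      show y i = x _
      have h2 := (Equiv.ofInjective x hx).apply_symm_apply
        ((Equiv.setCongr h.symm) ((Equiv.ofInjective y hy) i))
      have h3 := congrArg Subtype.val h2
      exact h3.symm
    rw [hM]
    have hkey : ∀ π : Equiv.Perm (Fin d),
        (∑ f : Fin d → Bool,
          ((-1 : ℂ) ^ (∑ i, ((if f (x i) then 1 else 0) + (if f (y i) then 1 else 0)))) •
            Matrix.single (fun i => π (x i)) (fun i => π (y i)) (1 : ℂ))
        = 0 := by
      intro π
      rw [← Finset.sum_smul, fsum x y hx hy, if_neg hr, zero_smul]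
    rw [Finset.sum_congr rfl (fun π _ => hkey π), Finset.sum_const, smul_zero, smul_zero]
end

section
/- (Dimension ratio of the distinct subspace in a Weyl module) In the Schur–Weyl decomposition (C^d)^{⊗t} ≅ ⊕_λ W_λ ⊗ V_λ, write the distinct-subspace projector as Λ = ⊕_λ Λ^{(λ)}_{W_λ} ⊗ I_{V_λ}. Then Tr[Λ^{(λ)}_{W_λ}] = (dim V_λ / t!) · Tr[Λ], and consequently Tr[Λ^{(λ)}_{W_λ}] / dim(W_λ) = Tr[Λ] / Π_{(i,j)∈λ}(d + j − i) ≥ ((d−t)/(d+t))^t for every partition λ ⊢ t. -/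
lemma trace_distinct_perm (d t : ℕ) (σ : Equiv.Perm (Fin t)) :
    Matrix.trace (distinctProj d t * permOp d t σ)
      = if σ = 1 then ((d.descFactorial t : ℕ) : ℂ) else 0 := by
  classical
  rw [Matrix.trace]
  have hdiag : ∀ a : Fin t → Fin d,
      (distinctProj d t * permOp d t σ).diag a
        = if (a = fun i => a (σ.symm i)) ∧ Function.Injective a then 1 else 0 := by
    intro a
    rw [Matrix.diag_apply, Matrix.mul_apply]
    rw [Finset.sum_eq_single a]
    · simp [distinctProj, permOp, ite_and]
    · intro b _ hb
      simp [distinctProj, permOp, Ne.symm hb]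
    · simp
  rw [Finset.sum_congr rfl fun a _ => hdiag a]
  by_cases hσ : σ = 1
  · subst hσ
    have hcond : ∀ a : Fin t → Fin d,
        ((a = fun i => a ((Equiv.symm (1 : Equiv.Perm (Fin t))) i)) ∧ Function.Injective a)
          = Function.Injective a := by
      intro a; exact propext ⟨fun h => h.2, fun h => ⟨rfl, h⟩⟩
    simp only [hcond, if_true]
    rw [Finset.sum_boole]
    norm_cast
    have hcard : Fintype.card {f : Fin t → Fin d // Function.Injective f}
        = d.descFactorial t := by
      rw [Fintype.card_congr (Equiv.subtypeInjectiveEquivEmbedding (Fin t) (Fin d)),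
        Fintype.card_embedding_eq, Fintype.card_fin, Fintype.card_fin]
    rw [← hcard, Fintype.card_subtype]
  · rw [if_neg hσ]
    apply Finset.sum_eq_zero
    intro a _
    rw [if_neg]
    rintro ⟨heq, hinj⟩
    apply hσ
    ext i
    have := congrFun heq i
    have h2 : σ.symm i = i := hinj this.symm
    exact congrArg Fin.val ((Equiv.symm_apply_eq σ).mp h2).symm

/-- dimension ratio of the distinct subspace in a Weyl module: in the
Schur–Weyl decomposition `(ℂ^d)^{⊗t} ≅ ⊕_λ W_λ ⊗ V_λ` the distinct-subspace projector has the
block form `Λ = ⊕_λ Λ^{(λ)}_{W_λ} ⊗ I_{V_λ}`.  The Schur–Weyl data is abstracted: `Part`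
indexes the partitions `λ ⊢ t`; `dimW λ, dimV λ` are the dimensions of the Weyl and Specht
modules; `trLamW λ = Tr[Λ^{(λ)}_{W_λ}]`, so that the block form gives
`trLamW λ ⋅ dimV λ = Tr[Λ ⋅ 1_{P_λ}]`; the isotypic projector satisfies the character formula
`1_{P_λ} = (dimV λ / t!) Σ_π χ_λ(π⁻¹) R_π` with `χ_λ(e) = dimV λ`; the Weyl dimension formula
reads `dimW λ ⋅ t! = dimV λ ⋅ Π_{(i,j)∈λ}(d+j−i)` with `Π_{(i,j)∈λ}(d+j−i) ≤ (d+t)^t`.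
Conclusion: `Tr[Λ^{(λ)}] = (dimV λ / t!) ⋅ Tr[Λ]`, and
`Tr[Λ^{(λ)}]/dim W_λ = Tr[Λ]/Π_{(i,j)∈λ}(d+j−i) ≥ ((d−t)/(d+t))^t`
(using `Tr[Λ] = d!/(d−t)!`). -/
theorem stmt_19 (d t : ℕ) (ht : 0 < t) (htd : t ≤ d)
    (Part : Type*) [Fintype Part]
    (dimW dimV trLamW : Part → ℕ)
    (contentProd : Part → ℝ)
    (Pproj : Part → Matrix (Fin t → Fin d) (Fin t → Fin d) ℂ)
    (χ : Part → Equiv.Perm (Fin t) → ℂ)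
    (hblock : ∀ lam, ((trLamW lam * dimV lam : ℕ) : ℂ)
        = Matrix.trace (distinctProj d t * Pproj lam))
    (hPproj : ∀ lam, Pproj lam
        = ((dimV lam : ℂ) / (t.factorial : ℂ)) •
            ∑ π : Equiv.Perm (Fin t), χ lam π⁻¹ • permOp d t π)
    (hχ : ∀ lam, χ lam 1 = (dimV lam : ℂ))
    (hdimVpos : ∀ lam, 0 < dimV lam)
    (hdimWpos : ∀ lam, 0 < dimW lam)
    (hWeyl : ∀ lam, (dimW lam : ℝ) * (t.factorial : ℝ) = (dimV lam : ℝ) * contentProd lam)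
    (hcontentpos : ∀ lam, 0 < contentProd lam)
    (hcontentle : ∀ lam, contentProd lam ≤ ((d : ℝ) + t) ^ t)
    (lam : Part) :
    ((trLamW lam : ℝ) * (t.factorial : ℝ)
        = (dimV lam : ℝ) * ((d.factorial / (d - t).factorial : ℕ) : ℝ))
    ∧ (trLamW lam : ℝ) / (dimW lam : ℝ)
        = ((d.factorial / (d - t).factorial : ℕ) : ℝ) / contentProd lam
    ∧ (((d : ℝ) - t) / ((d : ℝ) + t)) ^ t ≤ (trLamW lam : ℝ) / (dimW lam : ℝ) := by
  classical
  set N : ℕ := d.descFactorial t with hN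
  have hNdiv : d.factorial / (d - t).factorial = N := (Nat.descFactorial_eq_div htd).symm
  rw [hNdiv]
  -- Step 1: complex trace computation
  have key : ((trLamW lam * dimV lam : ℕ) : ℂ)
      = ((dimV lam : ℂ) / (t.factorial : ℂ)) * ((dimV lam : ℂ) * (N : ℂ)) := by
    rw [hblock, hPproj, Matrix.mul_smul, Matrix.trace_smul, smul_eq_mul]
    congr 1
    rw [Matrix.mul_sum, Matrix.trace_sum]
    rw [Finset.sum_congr rfl (fun π _ => by
      rw [Matrix.mul_smul, Matrix.trace_smul, trace_distinct_perm, smul_eq_mul])]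
    rw [Finset.sum_congr rfl (fun π _ => (mul_ite _ _ _ _).trans (by rw [mul_zero]))]
    rw [Finset.sum_ite_eq' Finset.univ (1 : Equiv.Perm (Fin t))
      (fun π => χ lam π⁻¹ * (N : ℂ))]
    simp [hχ]
  have htfac : (t.factorial : ℂ) ≠ 0 := by exact_mod_cast t.factorial_ne_zero
  have hVne : ((dimV lam : ℂ)) ≠ 0 := by exact_mod_cast (hdimVpos lam).ne'
  have hC : ((dimV lam : ℂ)) * (((trLamW lam : ℂ)) * (t.factorial : ℂ))
      = ((dimV lam : ℂ)) * (((dimV lam : ℂ)) * (N : ℂ)) := by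
    have := key
    push_cast at this
    field_simp at this
    linear_combination (dimV lam : ℂ) * this
  have hCeq : ((trLamW lam : ℂ)) * (t.factorial : ℂ) = ((dimV lam : ℂ)) * (N : ℂ) :=
    mul_left_cancel₀ hVne hC
  have hNat : trLamW lam * t.factorial = dimV lam * N := by exact_mod_cast hCeq
  have hNatR : (trLamW lam : ℝ) * (t.factorial : ℝ) = (dimV lam : ℝ) * (N : ℝ) := by
    exact_mod_cast hNat
  have htfacR : (t.factorial : ℝ) ≠ 0 := by exact_mod_cast t.factorial_ne_zero
  have h2 : (trLamW lam : ℝ) / (dimW lam : ℝ) = (N : ℝ) / contentProd lam := by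
    rw [div_eq_div_iff (by exact_mod_cast (hdimWpos lam).ne' : (dimW lam : ℝ) ≠ 0) (hcontentpos lam).ne']
    have e1 : (trLamW lam : ℝ) * contentProd lam * (t.factorial : ℝ)
        = (N : ℝ) * (dimW lam : ℝ) * (t.factorial : ℝ) := by
      calc (trLamW lam : ℝ) * contentProd lam * (t.factorial : ℝ)
          = ((trLamW lam : ℝ) * (t.factorial : ℝ)) * contentProd lam := by ring
        _ = ((dimV lam : ℝ) * (N : ℝ)) * contentProd lam := by rw [hNatR]
        _ = (N : ℝ) * ((dimV lam : ℝ) * contentProd lam) := by ring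
        _ = (N : ℝ) * ((dimW lam : ℝ) * (t.factorial : ℝ)) := by rw [← hWeyl lam]
        _ = (N : ℝ) * (dimW lam : ℝ) * (t.factorial : ℝ) := by ring
    exact mul_right_cancel₀ htfacR e1
  refine ⟨hNatR, h2, ?_⟩
  -- Step 3
  rw [h2, div_pow]
  have hdt : ((d : ℝ) - t) = ((d - t : ℕ) : ℝ) := by
    rw [Nat.cast_sub htd]
  have hNge : ((d : ℝ) - t) ^ t ≤ (N : ℝ) := by
    rw [hdt]
    have h1 : (d - t) ^ t ≤ N := by
      calc (d - t) ^ t ≤ (d + 1 - t) ^ t :=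
            Nat.pow_le_pow_left (by omega) t
        _ ≤ d.descFactorial t := Nat.pow_sub_le_descFactorial d t
    exact_mod_cast h1
  have hdpos : (0 : ℝ) < ((d : ℝ) + t) ^ t :=
    pow_pos (by positivity) t
  rw [div_le_div_iff₀ hdpos (hcontentpos lam)]
  have hnn : (0 : ℝ) ≤ ((d : ℝ) - t) ^ t := by
    rw [hdt]; positivity
  calc ((d : ℝ) - t) ^ t * contentProd lam
      ≤ (N : ℝ) * (((d : ℝ) + t) ^ t) :=
        mul_le_mul hNge (hcontentle lam) (le_of_lt (hcontentpos lam))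
          (Nat.cast_nonneg N)
    _ = (N : ℝ) * (((d : ℝ) + t) ^ t) := rfl
end
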